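/- Let f be a differentiable concave function on an open convex cone Γ ⊆ ℝⁿ satisfying limsup_{t→+∞} f(tλ)/t ≥ 0 for all λ ∈ Γ. Then ∑_{i=1}^n f_i(λ)μ_i ≥ 0 for all λ, μ ∈ Γ; in particular ∑_i f_i(λ)λ_i ≥ 0 for all λ ∈ Γ, and (if Γ contains the positive orthant) f_i(λ) ≥ 0 for all i and λ ∈ Γ. -/

import Mathlib

open Finset Filter Topology

/-- The i-th partial derivative `f_i(x) = ∂f/∂x_i (x)`. -/
noncomputable def pd {n : ℕ} (f : (Fin n → ℝ) → ℝ) (x : Fin n → ℝ) (i : Fin n) : ℝ :=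
  fderiv ℝ f x (Pi.single i 1)

/-- The set of values `t_λ = (∑ f_i(λ) λ_i)/(∑ f_j(λ))` over the level set `∂Γ^σ`. -/
def tset {n : ℕ} (Γ : Set (Fin n → ℝ)) (f : (Fin n → ℝ) → ℝ) (σ : ℝ) : Set ℝ :=
  {t : ℝ | ∃ x ∈ Γ, f x = σ ∧ t = (∑ i, pd f x i * x i) / (∑ i, pd f x i)}

/-- The cone `Γ_{σ,f} = { t (λ - τ 𝟏) : λ ∈ ∂Γ^σ, t > 0 }`. -/
def lcone {n : ℕ} (Γ : Set (Fin n → ℝ)) (f : (Fin n → ℝ) → ℝ) (σ τ : ℝ) :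
    Set (Fin n → ℝ) :=
  {y | ∃ x ∈ Γ, f x = σ ∧ ∃ t : ℝ, 0 < t ∧ y = t • (x - fun _ => τ)}

/-- The set of `k` such that some vector with the first `k` coordinates negative and
the remaining coordinates positive belongs to `C`; `κ_C` is its greatest element. -/
def kset {n : ℕ} (C : Set (Fin n → ℝ)) : Set ℕ :=
  {k : ℕ | ∃ α : Fin n → ℝ, (∀ i, 0 < α i) ∧
    (fun i : Fin n => if (i : ℕ) < k then -α i else α i) ∈ C}

/-- Subgradient inequality for concave differentiable functions. -/
lemma grad_ineq {n : ℕ} {Γ : Set (Fin n → ℝ)} {f : (Fin n → ℝ) → ℝ}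
    (hconc : ConcaveOn ℝ Γ f)
    {x y : Fin n → ℝ} (hx : x ∈ Γ) (hy : y ∈ Γ)
    (hdx : DifferentiableAt ℝ f x) :
    f y ≤ f x + fderiv ℝ f x (y - x) := by
  set g : ℝ → ℝ := fun s => f (x + s • (y - x)) with hg_def
  have hline : HasDerivAt (fun s : ℝ => x + s • (y - x)) (y - x) 0 := by
    simpa using ((hasDerivAt_id (0:ℝ)).smul_const (y - x)).const_add x
  have hdx' : HasFDerivAt f (fderiv ℝ f x) (x + (0:ℝ) • (y - x)) := by
    simpa using hdx.hasFDerivAt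
  have hg : HasDerivAt g (fderiv ℝ f x (y - x)) 0 := hdx'.comp_hasDerivAt 0 hline
  have htend : Tendsto (slope g 0) (𝓝[>] 0) (𝓝 (fderiv ℝ f x (y - x))) :=
    (hasDerivAt_iff_tendsto_slope.mp hg).mono_left
      (nhdsWithin_mono _ (fun s hs => ne_of_gt hs))
  have hev : ∀ᶠ s in 𝓝[>] (0:ℝ), f y - f x ≤ slope g 0 s := by
    filter_upwards [Ioc_mem_nhdsGT_of_mem (by simp : (0:ℝ) ∈ Set.Ico (0:ℝ) 1)]
      with s hs
    obtain ⟨hs0, hs1⟩ := hs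
    have hcomb : (1 - s) • x + s • y = x + s • (y - x) := by
      module
    have hconcs := hconc.2 hx hy (by linarith : (0:ℝ) ≤ 1 - s) hs0.le (by ring)
    rw [hcomb] at hconcs
    have hg0 : g 0 = f x := by simp [hg_def]
    have hslope : slope g 0 s = (g s - g 0) / s := by simp [slope_def_field]
    rw [hslope, le_div_iff₀ hs0, hg0]
    have hgs : g s = f (x + s • (y - x)) := rfl
    simp only [smul_eq_mul] at hconcs
    nlinarith [hconcs]
  have := ge_of_tendsto htend hev
  linarith

theorem stmt10 {n : ℕ} (Γ : Set (Fin n → ℝ)) (f : (Fin n → ℝ) → ℝ)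
    (hopen : IsOpen Γ) (hconv : Convex ℝ Γ)
    (hcone : ∀ x ∈ Γ, ∀ t : ℝ, 0 < t → t • x ∈ Γ)
    (horth : {x : Fin n → ℝ | ∀ i, 0 < x i} ⊆ Γ)
    (hconc : ConcaveOn ℝ Γ f)
    (hdiff : ∀ x ∈ Γ, DifferentiableAt ℝ f x)
    -- `limsup_{t→+∞} f(tλ)/t ≥ 0` for every `λ ∈ Γ`
    (hlimsup : ∀ lam ∈ Γ, ∀ ε : ℝ, 0 < ε → ∃ᶠ t : ℝ in atTop, -ε ≤ f (t • lam) / t) :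
    (∀ lam ∈ Γ, ∀ μ ∈ Γ, 0 ≤ ∑ i, pd f lam i * μ i) ∧
    (∀ lam ∈ Γ, 0 ≤ ∑ i, pd f lam i * lam i) ∧
    (∀ lam ∈ Γ, ∀ i : Fin n, 0 ≤ pd f lam i) := by
  have part1 : ∀ lam ∈ Γ, ∀ μ ∈ Γ, 0 ≤ ∑ i, pd f lam i * μ i := by
    intro lam hlam μ hμ
    set L := fderiv ℝ f lam with hL
    have hLrepr : ∀ v : Fin n → ℝ, L v = ∑ i, pd f lam i * v i := by
      intro v
      have h1 : ∑ i, v i • (Pi.single i 1 : Fin n → ℝ) = v := by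
        funext j
        simp [Finset.sum_apply, Pi.single_apply]
      calc L v = L (∑ i, v i • (Pi.single i 1 : Fin n → ℝ)) := by rw [h1]
        _ = ∑ i, v i • L (Pi.single i 1 : Fin n → ℝ) := by
            rw [map_sum]; simp
        _ = ∑ i, pd f lam i * v i := by
            simp [pd, smul_eq_mul, mul_comm]; rfl
    set S := ∑ i, pd f lam i * μ i with hS
    by_contra hneg
    push_neg at hneg
    set ε := -S/2 with hε_def
    have hε : 0 < ε := by simp [hε_def]; linarith
    set C := f lam - L lam with hC
    have key : ∀ t : ℝ, 0 < t → f (t • μ) ≤ t * S + C := by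
      intro t ht
      have hmem : t • μ ∈ Γ := hcone μ hμ t ht
      have := grad_ineq hconc hlam hmem (hdiff lam hlam)
      have hlin : L (t • μ - lam) = t * S - L lam := by
        rw [map_sub, map_smul, hLrepr μ, smul_eq_mul]
      rw [← hL, hlin] at this
      linarith
    have hfreq := hlimsup μ hμ ε hε
    have htend0 : Tendsto (fun t : ℝ => C / t) atTop (𝓝 0) := by
      simpa [div_eq_mul_inv] using tendsto_inv_atTop_zero.const_mul C
    have hev : ∀ᶠ t : ℝ in atTop, C / t < ε ∧ 0 < t := by
      filter_upwards [htend0.eventually (gt_mem_nhds hε), eventually_gt_atTop (0:ℝ)]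
        with t h1 h2
      exact ⟨h1, h2⟩
    obtain ⟨t, hbound, hlt, ht0⟩ := (hfreq.and_eventually hev).exists
    have h1 : -ε * t ≤ f (t • μ) := (le_div_iff₀ ht0).mp hbound
    have h2 : C < ε * t := (div_lt_iff₀ ht0).mp hlt
    have h3 := key t ht0
    have hS2 : S = -2 * ε := by rw [hε_def]; ring
    rw [hS2] at h3
    linarith
  refine ⟨part1, fun lam hlam => part1 lam hlam lam hlam, ?_⟩
  intro lam hlam i
  by_contra h
  push_neg at h
  set T := ∑ j, pd f lam j with hT
  set ε := -pd f lam i / (2 * (|T| + 1)) with hε_def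
  have hden : (0:ℝ) < 2 * (|T| + 1) := by positivity
  have hε : 0 < ε := div_pos (by linarith) hden
  set μ : Fin n → ℝ := fun j => (if j = i then 1 else 0) + ε with hμ_def
  have hμΓ : μ ∈ Γ := by
    apply horth
    intro j
    by_cases hj : j = i <;> simp [hμ_def, hj] <;> linarith
  have hsum := part1 lam hlam μ hμΓ
  have hcalc : ∑ j, pd f lam j * μ j = pd f lam i + ε * T := by
    simp only [hμ_def, mul_add, Finset.sum_add_distrib, mul_ite, mul_one, mul_zero]
    rw [Finset.sum_ite_eq' Finset.univ i (pd f lam)]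
    rw [hT, ← Finset.sum_mul, mul_comm]
    simp
  rw [hcalc] at hsum
  have hεT : ε * T ≤ ε * (|T| + 1) := by
    apply mul_le_mul_of_nonneg_left _ hε.le
    linarith [le_abs_self T]
  have : ε * (|T| + 1) = -pd f lam i / 2 := by
    rw [hε_def]
    field_simp
  linarith
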